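/- Existence of preventing extensions in the canonical game: For any maximal consistent set X_0, any play (α, δ, ω) ∈ P of the canonical game G(X_0), any coalition C, any action profile s ∈ Δ^C, and any formula with ¬(φ → B_C φ) ∈ hd(ω), there is a play (α', δ', ω') ∈ P such that α ∼_C α', s =_C δ', and φ ∈ hd(ω'). -/

import Mathlib

inductive Formula (A Prp : Type) : Type
  | var : Prp → Formula A Prp
  | bot : Formula A Prp
  | neg : Formula A Prp → Formula A Prp
  | imp : Formula A Prp → Formula A Prp → Formula A Prp
  | know : Set A → Formula A Prp → Formula A Prp
  | blame : Set A → Formula A Prp → Formula A Prp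

namespace Formula
variable {A Prp : Type}
def top : Formula A Prp := neg bot
def or (φ ψ : Formula A Prp) : Formula A Prp := imp (neg φ) ψ
def and (φ ψ : Formula A Prp) : Formula A Prp := neg (imp φ (neg ψ))
def kbar (C : Set A) (φ : Formula A Prp) : Formula A Prp := neg (know C (neg φ))
end Formula

def evalF {A Prp : Type} (v : Formula A Prp → Prop) : Formula A Prp → Prop
  | .var p => v (.var p)
  | .bot => False
  | .neg φ => ¬ evalF v φ
  | .imp φ ψ => evalF v φ → evalF v ψ
  | .know C φ => v (.know C φ)
  | .blame C φ => v (.blame C φ)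

def Tautology {A Prp : Type} (φ : Formula A Prp) : Prop := ∀ v, evalF v φ

inductive Provable {A Prp : Type} : Formula A Prp → Prop
  | taut {φ} : Tautology φ → Provable φ
  | truthK {C φ} : Provable (.imp (.know C φ) φ)
  | truthB {C φ} : Provable (.imp (.blame C φ) φ)
  | distr {C φ ψ} : Provable (.imp (.know C (.imp φ ψ)) (.imp (.know C φ) (.know C ψ)))
  | negIntro {C φ} : Provable (.imp (.neg (.know C φ)) (.know C (.neg (.know C φ))))
  | monoK {C D φ} (h : C ⊆ D) : Provable (.imp (.know C φ) (.know D φ))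
  | monoB {C D φ} (h : C ⊆ D) : Provable (.imp (.blame C φ) (.blame D φ))
  | noneBlame {φ} : Provable (.neg (.blame (∅ : Set A) φ))
  | blameTop {C} : Provable (.neg (.blame C Formula.top))
  | jointResp {C D φ ψ} (h : Disjoint C D) :
      Provable (.imp (.and (.kbar C (.blame C φ)) (.kbar D (.blame D ψ)))
        (.imp (.or φ ψ) (.blame (C ∪ D) (.or φ ψ))))
  | knownCause {C φ ψ} :
      Provable (.imp (.know C (.imp φ ψ)) (.imp (.blame C ψ) (.imp φ (.blame C φ))))
  | fairness {C φ} : Provable (.imp (.blame C φ) (.know C (.imp φ (.blame C φ))))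
  | mp {φ ψ} : Provable (.imp φ ψ) → Provable φ → Provable ψ
  | nec {C φ} : Provable φ → Provable (.know C φ)

inductive ProvableFrom {A Prp : Type} (X : Set (Formula A Prp)) : Formula A Prp → Prop
  | thm {φ} : Provable φ → ProvableFrom X φ
  | hyp {φ} : φ ∈ X → ProvableFrom X φ
  | mp {φ ψ} : ProvableFrom X (.imp φ ψ) → ProvableFrom X φ → ProvableFrom X ψ

def Consistent {A Prp : Type} (X : Set (Formula A Prp)) : Prop :=
  ¬ ProvableFrom X Formula.bot

/-- Maximal consistent set of formulae. -/
def MaxCons {A Prp : Type} (X : Set (Formula A Prp)) : Prop :=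
  Consistent X ∧ ∀ Y, Consistent Y → X ⊆ Y → Y = X

/-- A valid chain `C₁, X₁, …, Cₙ, Xₙ` extending a set `X`: each `Xᵢ` is maximal
consistent and `{φ | K_{Cᵢ} φ ∈ X_{i-1}} ⊆ Xᵢ`. -/
def ValidChain {A Prp : Type} :
    Set (Formula A Prp) → List (Set A × Set (Formula A Prp)) → Prop
  | _, [] => True
  | X, (C, Y) :: rest =>
      MaxCons Y ∧ (∀ φ, Formula.know C φ ∈ X → φ ∈ Y) ∧ ValidChain Y rest

/-- Outcomes of the canonical game `G(X₀)`: the sequences `X₀, C₁, X₁, …, Cₙ, Xₙ`. -/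
def COutcome {A Prp : Type} (X₀ : Set (Formula A Prp)) :=
  {l : List (Set A × Set (Formula A Prp)) // ValidChain X₀ l}

/-- `hd ω`: the last maximal consistent set of the sequence ω. -/
def hd {A Prp : Type} (X₀ : Set (Formula A Prp)) (ω : COutcome X₀) :
    Set (Formula A Prp) :=
  (ω.1.map Prod.snd).getLastD X₀

/-- `ω ∼_a ω'`: every edge along the unique path between the tree nodes ω and ω'
is labeled with agent a (equivalently, after removing a common prefix, every
coalition label remaining in either sequence contains a). -/
def simOut {A Prp : Type} (X₀ : Set (Formula A Prp)) (a : A) (ω ω' : COutcome X₀) : Prop :=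
  ∃ ρ t₁ t₂, ω.1 = ρ ++ t₁ ∧ ω'.1 = ρ ++ t₂ ∧
    (∀ st ∈ t₁, a ∈ st.1) ∧ (∀ st ∈ t₂, a ∈ st.1)

/-- `ω ∼_C ω'`. -/
def simOutC {A Prp : Type} (X₀ : Set (Formula A Prp)) (C : Set A)
    (ω ω' : COutcome X₀) : Prop :=
  ∀ a ∈ C, simOut X₀ a ω ω'

/-- Initial states of the canonical game: equivalence classes Ω/∼_𝒜. -/
def CanonI {A Prp : Type} (X₀ : Set (Formula A Prp)) :=
  Quot (fun ω ω' : COutcome X₀ => ∀ a : A, simOut X₀ a ω ω')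

/-- `α ∼_C α'` on initial states. -/
def simIC {A Prp : Type} (X₀ : Set (Formula A Prp)) (C : Set A)
    (α α' : CanonI X₀) : Prop :=
  ∃ ω ω' : COutcome X₀, Quot.mk _ ω = α ∧ Quot.mk _ ω' = α' ∧ simOutC X₀ C ω ω'

/-- Plays of the canonical game `G(X₀)`: triples `(α, δ, ω)` such that `ω ∈ α` and
for every formula `K̄_C B_C ψ ∈ hd(ω)`, if `δ(a) = ψ` for each `a ∈ C`, then
`¬ψ ∈ hd(ω)`. The set of actions is Δ = Φ. -/
def CanonP {A Prp : Type} (X₀ : Set (Formula A Prp)) :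
    Set (CanonI X₀ × (A → Formula A Prp) × COutcome X₀) :=
  {t | Quot.mk _ t.2.2 = t.1 ∧
    ∀ (C : Set A) (ψ : Formula A Prp),
      Formula.kbar C (Formula.blame C ψ) ∈ hd X₀ t.2.2 →
      (∀ a ∈ C, t.2.1 a = ψ) → Formula.neg ψ ∈ hd X₀ t.2.2}

section Aux
open Formula
variable {A Prp : Type}

lemma pf_mono {X Y : Set (Formula A Prp)} (hXY : X ⊆ Y) {φ : Formula A Prp}
    (h : ProvableFrom X φ) : ProvableFrom Y φ := by
  induction h with
  | thm h => exact .thm h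
  | hyp h => exact .hyp (hXY h)
  | mp _ _ ih1 ih2 => exact .mp ih1 ih2

lemma tautP {φ : Formula A Prp} (h : ∀ v, evalF v φ) : Provable φ := Provable.taut h

lemma deduction {X : Set (Formula A Prp)} {φ ψ : Formula A Prp}
    (h : ProvableFrom (insert φ X) ψ) : ProvableFrom X (φ.imp ψ) := by
  induction h with
  | @thm χ h =>
      exact .mp (.thm (tautP (by intro v; simp [evalF]; tauto))) (.thm h)
  | @hyp χ h =>
      rcases h with h | h
      · exact .thm (tautP (by subst h; intro v; simp [evalF]))
      · exact .mp (.thm (tautP (by intro v; simp [evalF]; tauto))) (.hyp h)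
  | @mp a b _ _ ih1 ih2 =>
      exact .mp (.mp (.thm (tautP (by intro v; simp [evalF]; tauto))) ih1) ih2

lemma pf_empty {φ : Formula A Prp} (h : ProvableFrom (∅ : Set (Formula A Prp)) φ) :
    Provable φ := by
  induction h with
  | thm h => exact h
  | hyp h => exact absurd h (Set.notMem_empty _)
  | mp _ _ ih1 ih2 => exact ih1.mp ih2

lemma finite_hyps {X : Set (Formula A Prp)} {φ : Formula A Prp} (h : ProvableFrom X φ) :
    ∃ l : List (Formula A Prp), (∀ χ ∈ l, χ ∈ X) ∧ ProvableFrom {χ | χ ∈ l} φ := by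
  induction h with
  | @thm χ h => exact ⟨[], by simp, .thm h⟩
  | @hyp χ h => exact ⟨[χ], by simpa using h, .hyp (by simp)⟩
  | @mp a b _ _ ih1 ih2 =>
      obtain ⟨l1, hl1, p1⟩ := ih1
      obtain ⟨l2, hl2, p2⟩ := ih2
      refine ⟨l1 ++ l2, ?_, ?_⟩
      · intro χ hχ
        rcases List.mem_append.1 hχ with h | h
        exacts [hl1 _ h, hl2 _ h]
      exact .mp (pf_mono (by intro χ hχ; simp_all) p1) (pf_mono (by intro χ hχ; simp_all) p2)

lemma peel {X : Set (Formula A Prp)} (L : List (Formula A Prp)) {θ : Formula A Prp}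
    (h : ProvableFrom (X ∪ {f | f ∈ L}) θ) : ProvableFrom X (L.foldr Formula.imp θ) := by
  induction L generalizing X with
  | nil => exact pf_mono (by simp) h
  | cons η t ih =>
      have h1 : ProvableFrom ((insert η X) ∪ {f | f ∈ t}) θ := by
        refine pf_mono ?_ h
        intro χ hχ
        rcases hχ with h | h
        · exact Or.inl (Set.mem_insert_of_mem _ h)
        · rcases List.mem_cons.1 h with h | h
          · exact Or.inl (by simp [h])
          · exact Or.inr h
      exact deduction (ih h1)

end Aux
section Aux2
variable {A Prp : Type}

lemma mcs_closed {X : Set (Formula A Prp)} (hX : MaxCons X) {φ : Formula A Prp}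
    (h : ProvableFrom X φ) : φ ∈ X := by
  have hcons : Consistent (insert φ X) := by
    intro hbot
    have h2 : ProvableFrom X (φ.imp .bot) := deduction hbot
    exact hX.1 (.mp h2 h)
  have := hX.2 _ hcons (Set.subset_insert _ _)
  rw [← this]; exact Set.mem_insert _ _

lemma mcs_prov {X : Set (Formula A Prp)} (hX : MaxCons X) {φ : Formula A Prp}
    (h : Provable φ) : φ ∈ X := mcs_closed hX (.thm h)

lemma mcs_mp {X : Set (Formula A Prp)} (hX : MaxCons X) {φ ψ : Formula A Prp}
    (h1 : φ.imp ψ ∈ X) (h2 : φ ∈ X) : ψ ∈ X := mcs_closed hX (.mp (.hyp h1) (.hyp h2))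

lemma mcs_not_both {X : Set (Formula A Prp)} (hX : MaxCons X) {φ : Formula A Prp}
    (h1 : φ ∈ X) (h2 : φ.neg ∈ X) : False := by
  have : ProvableFrom X .bot :=
    .mp (.mp (.thm (tautP (φ := φ.imp (φ.neg.imp .bot)) (by intro v; simp only [evalF]; tauto)))
      (.hyp h1)) (.hyp h2)
  exact hX.1 this

lemma mcs_neg_of_not_mem {X : Set (Formula A Prp)} (hX : MaxCons X) {φ : Formula A Prp}
    (h : φ ∉ X) : φ.neg ∈ X := by
  have hcons : Consistent (insert φ.neg X) := by
    intro hbot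
    have h2 : ProvableFrom X (φ.neg.imp .bot) := deduction hbot
    have h3 : ProvableFrom X φ :=
      .mp (.thm (tautP (φ := (φ.neg.imp .bot).imp φ) (by intro v; simp only [evalF]; tauto))) h2
    exact h (mcs_closed hX h3)
  have := hX.2 _ hcons (Set.subset_insert _ _)
  rw [← this]; exact Set.mem_insert _ _

lemma lindenbaum {X : Set (Formula A Prp)} (h : Consistent X) :
    ∃ Y, X ⊆ Y ∧ MaxCons Y := by
  have hzorn := zorn_subset_nonempty {Y : Set (Formula A Prp) | Consistent Y} ?_ X h
  · obtain ⟨Y, hXY, hYS, hmax⟩ := hzorn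
    refine ⟨Y, hXY, hYS, ?_⟩
    intro Z hZ hYZ
    exact Set.Subset.antisymm (hmax hZ hYZ) hYZ
  · intro c hc hchain ⟨Z0, hZ0⟩
    refine ⟨⋃₀ c, ?_, fun s hs => Set.subset_sUnion_of_mem hs⟩
    intro hbot
    obtain ⟨l, hl, hpf⟩ := finite_hyps hbot
    -- find a member of the chain containing all of l
    have : ∃ W ∈ c, ∀ χ ∈ l, χ ∈ W := by
      clear hpf
      induction l with
      | nil => exact ⟨Z0, hZ0, by simp⟩
      | cons η t ih =>
          obtain ⟨W, hWc, hW⟩ := ih (fun χ hχ => hl χ (List.mem_cons_of_mem _ hχ))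
          obtain ⟨V, hVc, hηV⟩ := hl η (List.mem_cons_self)
          rcases hchain.total hWc hVc with hWV | hVW
          · exact ⟨V, hVc, fun χ hχ => by
              rcases List.mem_cons.1 hχ with rfl | hχ
              exacts [hηV, hWV (hW _ hχ)]⟩
          · exact ⟨W, hWc, fun χ hχ => by
              rcases List.mem_cons.1 hχ with rfl | hχ
              exacts [hVW hηV, hW _ hχ]⟩
    obtain ⟨W, hWc, hW⟩ := this
    exact hc hWc (pf_mono (by intro χ hχ; exact hW _ hχ) hpf)

end Aux2
section Aux3
variable {A Prp : Type}

/-- tautological composition -/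
lemma provComp {a b c : Formula A Prp} (h1 : Provable (a.imp b)) (h2 : Provable (b.imp c)) :
    Provable (a.imp c) :=
  .mp (.mp (tautP (φ := (a.imp b).imp ((b.imp c).imp (a.imp c)))
    (by intro v; simp only [evalF]; tauto)) h1) h2

/-- lift a provable implication under K -/
lemma kLift {F : Set A} {a b : Formula A Prp} (h : Provable (a.imp b)) :
    Provable ((Formula.know F a).imp (Formula.know F b)) :=
  .mp Provable.distr (h.nec)

/-- positive introspection: ⊢ K_F θ → K_F K_F θ -/
lemma posIntro (F : Set A) (θ : Formula A Prp) :
    Provable ((Formula.know F θ).imp (Formula.know F (Formula.know F θ))) := by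
  have t1 : Provable ((Formula.know F θ).imp (Formula.neg (Formula.know F (Formula.neg (Formula.know F θ))))) := by
    have htr : Provable ((Formula.know F (Formula.neg (Formula.know F θ))).imp (Formula.neg (Formula.know F θ))) := Provable.truthK
    exact .mp (tautP (φ := ((Formula.know F (Formula.neg (Formula.know F θ))).imp (Formula.neg (Formula.know F θ))).imp _)
      (by intro v; simp only [evalF]; tauto)) htr
  have t2 : Provable ((Formula.neg (Formula.know F (Formula.neg (Formula.know F θ)))).imp
      (Formula.know F (Formula.neg (Formula.know F (Formula.neg (Formula.know F θ)))))) := Provable.negIntro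
  have t3 : Provable ((Formula.neg (Formula.know F (Formula.neg (Formula.know F θ)))).imp (Formula.know F θ)) := by
    have h5 : Provable ((Formula.neg (Formula.know F θ)).imp (Formula.know F (Formula.neg (Formula.know F θ)))) := Provable.negIntro
    exact .mp (tautP (φ := ((Formula.neg (Formula.know F θ)).imp (Formula.know F (Formula.neg (Formula.know F θ)))).imp _)
      (by intro v; simp only [evalF]; tauto)) h5
  have t4 : Provable ((Formula.know F (Formula.neg (Formula.know F (Formula.neg (Formula.know F θ))))).imp
      (Formula.know F (Formula.know F θ))) := kLift t3
  exact provComp (provComp t1 t2) t4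

/-- derived fairness: ⊢ K̄_D B_D ψ → (ψ → B_D ψ) -/
lemma kbarFair (D : Set A) (ψ : Formula A Prp) :
    Provable ((Formula.kbar D (Formula.blame D ψ)).imp (ψ.imp (Formula.blame D ψ))) := by
  set θ := ψ.imp (Formula.blame D ψ) with hθ
  -- ⊢ ¬θ → ¬K_D θ
  have h1 : Provable (θ.neg.imp (Formula.know D θ).neg) := by
    have htr : Provable ((Formula.know D θ).imp θ) := Provable.truthK
    exact .mp (tautP (φ := ((Formula.know D θ).imp θ).imp _) (by intro v; simp only [evalF]; tauto)) htr
  -- ⊢ ¬K_D θ → K_D ¬K_D θ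
  have h2 : Provable ((Formula.know D θ).neg.imp (Formula.know D (Formula.know D θ).neg)) := Provable.negIntro
  -- ⊢ K_D ¬K_D θ → K_D ¬B_D ψ
  have h3 : Provable ((Formula.know D (Formula.know D θ).neg).imp (Formula.know D (Formula.blame D ψ).neg)) := by
    refine kLift ?_
    have hf : Provable ((Formula.blame D ψ).imp (Formula.know D θ)) := Provable.fairness
    exact .mp (tautP (φ := ((Formula.blame D ψ).imp (Formula.know D θ)).imp _) (by intro v; simp only [evalF]; tauto)) hf
  have h4 : Provable (θ.neg.imp (Formula.know D (Formula.blame D ψ).neg)) := provComp (provComp h1 h2) h3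
  -- contrapose
  exact .mp (tautP (φ := (θ.neg.imp (Formula.know D (Formula.blame D ψ).neg)).imp
    ((Formula.neg (Formula.know D (Formula.neg (Formula.blame D ψ)))).imp θ)) (by intro v; simp only [evalF]; tauto)) h4

-- MCS level K-tools
variable {X : Set (Formula A Prp)}

lemma k_mp (hX : MaxCons X) {F : Set A} {a b : Formula A Prp}
    (h1 : Formula.know F (a.imp b) ∈ X) (h2 : Formula.know F a ∈ X) :
    Formula.know F b ∈ X :=
  mcs_mp hX (mcs_mp hX (mcs_prov hX Provable.distr) h1) h2

lemma nec_mem (hX : MaxCons X) {F : Set A} {a : Formula A Prp} (h : Provable a) :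
    Formula.know F a ∈ X := mcs_prov hX h.nec

lemma k_mono_mem (hX : MaxCons X) {E F : Set A} (hEF : E ⊆ F) {a : Formula A Prp}
    (h : Formula.know E a ∈ X) : Formula.know F a ∈ X :=
  mcs_mp hX (mcs_prov hX (Provable.monoK hEF)) h

lemma k_mp2 (hX : MaxCons X) {F : Set A} {a b c : Formula A Prp}
    (h : Provable (a.imp (b.imp c))) (h1 : Formula.know F a ∈ X)
    (h2 : Formula.know F b ∈ X) : Formula.know F c ∈ X :=
  k_mp hX (k_mp hX (nec_mem hX h) h1) h2

lemma k_mp3 (hX : MaxCons X) {F : Set A} {a b c d : Formula A Prp}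
    (h : Provable (a.imp (b.imp (c.imp d)))) (h1 : Formula.know F a ∈ X)
    (h2 : Formula.know F b ∈ X) (h3 : Formula.know F c ∈ X) : Formula.know F d ∈ X :=
  k_mp hX (k_mp hX (k_mp hX (nec_mem hX h) h1) h2) h3

lemma pos_mem (hX : MaxCons X) {F : Set A} {a : Formula A Prp}
    (h : Formula.know F a ∈ X) : Formula.know F (Formula.know F a) ∈ X :=
  mcs_mp hX (mcs_prov hX (posIntro F a)) h

lemma kbar_known (hX : MaxCons X) {D F : Set A} (hDF : D ⊆ F) {ψ : Formula A Prp}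
    (h : Formula.kbar D (Formula.blame D ψ) ∈ X) :
    Formula.know F (Formula.kbar D (Formula.blame D ψ)) ∈ X := by
  have h1 : Formula.know D (Formula.kbar D (Formula.blame D ψ)) ∈ X :=
    mcs_mp hX (mcs_prov hX Provable.negIntro) h
  exact k_mono_mem hX hDF h1

end Aux3
section Aux4
open Formula
variable {A Prp : Type} {X : Set (Formula A Prp)}

lemma step_lemma (hX : MaxCons X) {E D : Set A} {Ψ ψ : Formula A Prp}
    (hdisj : Disjoint D E)
    (hE : Formula.kbar E (Formula.blame E Ψ) ∈ X ∨ Formula.know E Ψ.neg ∈ X)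
    (hD : Formula.kbar D (Formula.blame D ψ) ∈ X) :
    Formula.kbar (D ∪ E) (Formula.blame (D ∪ E) (Formula.or ψ Ψ)) ∈ X ∨
      Formula.know (D ∪ E) (Formula.or ψ Ψ).neg ∈ X := by
  set F := D ∪ E with hF
  set Ψ' := Formula.or ψ Ψ with hΨ'
  by_cases hκ : Formula.know F (Formula.blame F Ψ').neg ∈ X
  · right
    have h2 : Formula.know F (Formula.kbar D (Formula.blame D ψ)) ∈ X :=
      kbar_known hX (Set.subset_union_left) hD
    rcases hE with hE | hE
    · -- joint responsibility case
      have h1 : Formula.know F (Formula.kbar E (Formula.blame E Ψ)) ∈ X :=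
        kbar_known hX (Set.subset_union_right) hE
      have hjr : Provable ((Formula.kbar D (Formula.blame D ψ)).imp
          ((Formula.kbar E (Formula.blame E Ψ)).imp (Ψ'.imp (Formula.blame F Ψ')))) := by
        have := Provable.jointResp (A := A) (Prp := Prp) (C := D) (D := E) (φ := ψ) (ψ := Ψ) hdisj
        exact .mp (tautP (φ := ((Formula.and (Formula.kbar D (Formula.blame D ψ))
            (Formula.kbar E (Formula.blame E Ψ))).imp (Ψ'.imp (Formula.blame F Ψ'))).imp _)
          (by intro v; simp only [evalF, Formula.and, Formula.or, Formula.kbar]; tauto)) this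
      have h3 : Formula.know F (Ψ'.imp (Formula.blame F Ψ')) ∈ X := k_mp2 hX hjr h2 h1
      -- with K_F ¬B_F Ψ' conclude K_F ¬Ψ'
      exact k_mp2 hX (tautP (φ := (Ψ'.imp (Formula.blame F Ψ')).imp
          (((Formula.blame F Ψ').neg).imp Ψ'.neg))
        (by intro v; simp only [evalF, Formula.or]; tauto)) h3 hκ
    · -- known ¬Ψ case
      have hF1 : Formula.know F Ψ.neg ∈ X := k_mono_mem hX Set.subset_union_right hE
      -- T3 : ⊢ K_F ¬Ψ → (K̄_D B_D ψ → (¬B_F Ψ' → ¬ψ))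
      have t1 : Provable ((Formula.know F Ψ.neg).imp (Formula.know F (Ψ'.imp ψ))) :=
        kLift (tautP (φ := (Ψ.neg).imp (Ψ'.imp ψ)) (by intro v; simp only [evalF, Formula.or, hΨ']; tauto))
      have t2 : Provable ((Formula.know F (Ψ'.imp ψ)).imp
          ((Formula.blame F ψ).imp (Ψ'.imp (Formula.blame F Ψ')))) := Provable.knownCause
      have t3 : Provable ((Formula.kbar D (Formula.blame D ψ)).imp (ψ.imp (Formula.blame F ψ))) := by
        have hm : Provable ((Formula.blame D ψ).imp (Formula.blame F ψ)) :=
          Provable.monoB Set.subset_union_left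
        exact .mp (.mp (tautP (φ := ((Formula.kbar D (Formula.blame D ψ)).imp (ψ.imp (Formula.blame D ψ))).imp
            (((Formula.blame D ψ).imp (Formula.blame F ψ)).imp _))
          (by intro v; simp only [evalF, Formula.kbar]; tauto)) (kbarFair D ψ)) hm
      have T3 : Provable ((Formula.know F Ψ.neg).imp ((Formula.kbar D (Formula.blame D ψ)).imp
          (((Formula.blame F Ψ').neg).imp ψ.neg))) := by
        refine .mp (.mp (.mp (tautP ?_) t1) t2) t3
        intro v; simp only [evalF, Formula.kbar, Formula.or, hΨ']; tauto
      have h4 : Formula.know F ψ.neg ∈ X := k_mp3 hX T3 (pos_mem hX hF1) h2 hκ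
      exact k_mp2 hX (tautP (φ := (ψ.neg).imp ((Ψ.neg).imp Ψ'.neg))
        (by intro v; simp only [evalF, Formula.or]; tauto)) h4 hF1
  · left
    exact mcs_neg_of_not_mem hX hκ

end Aux4
section Aux5
variable {A Prp : Type} {X : Set (Formula A Prp)}

lemma mem_foldE {Dw : Formula A Prp → Set A} {a : A} :
    ∀ {t : List (Formula A Prp)},
      a ∈ t.foldr (fun ψ e => Dw ψ ∪ e) (∅ : Set A) → ∃ ψ' ∈ t, a ∈ Dw ψ'
  | [], h => absurd h (Set.notMem_empty _)
  | ψ :: t, h => by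
      rcases h with h | h
      · exact ⟨ψ, List.mem_cons_self, h⟩
      · obtain ⟨ψ', hψ', ha⟩ := mem_foldE h
        exact ⟨ψ', List.mem_cons_of_mem _ hψ', ha⟩

lemma claim_gen (hX : MaxCons X) (Dw : Formula A Prp → Set A) (C : Set A) :
    ∀ (lψ : List (Formula A Prp)), lψ.Nodup →
      (∀ ψ ∈ lψ, Dw ψ ⊆ C) →
      (∀ ψ ∈ lψ, Formula.kbar (Dw ψ) (Formula.blame (Dw ψ) ψ) ∈ X) →
      (∀ ψ ∈ lψ, ∀ ψ' ∈ lψ, ψ ≠ ψ' → Disjoint (Dw ψ) (Dw ψ')) →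
      (lψ.foldr (fun ψ e => Dw ψ ∪ e) (∅ : Set A) ⊆ C) ∧
      (Formula.kbar (lψ.foldr (fun ψ e => Dw ψ ∪ e) (∅ : Set A))
          (Formula.blame (lψ.foldr (fun ψ e => Dw ψ ∪ e) (∅ : Set A))
            (lψ.foldr Formula.or Formula.bot)) ∈ X ∨
        Formula.know (lψ.foldr (fun ψ e => Dw ψ ∪ e) (∅ : Set A))
          (lψ.foldr Formula.or Formula.bot).neg ∈ X)
  | [], _, _, _, _ => by
      refine ⟨by simp, Or.inr ?_⟩
      exact nec_mem hX (tautP (φ := (Formula.bot).neg) (by intro v; simp [evalF]))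
  | ψ :: t, hnd, hsub, hkbar, hdisj => by
      obtain ⟨hEC, hIH⟩ := claim_gen hX Dw C t (List.nodup_cons.1 hnd).2
        (fun ψ' h => hsub ψ' (List.mem_cons_of_mem _ h))
        (fun ψ' h => hkbar ψ' (List.mem_cons_of_mem _ h))
        (fun a ha b hb => hdisj a (List.mem_cons_of_mem _ ha) b (List.mem_cons_of_mem _ hb))
      have hdis : Disjoint (Dw ψ) (t.foldr (fun ψ e => Dw ψ ∪ e) (∅ : Set A)) := by
        rw [Set.disjoint_right]
        intro a haE haD
        obtain ⟨ψ', hψ't, ha'⟩ := mem_foldE haE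
        have hne : ψ ≠ ψ' := by
          rintro rfl; exact (List.nodup_cons.1 hnd).1 hψ't
        exact Set.disjoint_left.1
          (hdisj ψ (List.mem_cons_self) ψ' (List.mem_cons_of_mem _ hψ't) hne) haD ha'
      constructor
      · simp only [List.foldr]
        exact Set.union_subset (hsub ψ (List.mem_cons_self)) hEC
      · exact step_lemma hX hdis hIH (hkbar ψ (List.mem_cons_self))

/-- link: ⊢ (¬ψ₁ → … → ¬ψₙ → ⊥) → (ψ₁ ∨ … ∨ ψₙ) -/
lemma link_lemma : ∀ (l : List (Formula A Prp)),
    Provable (((l.map Formula.neg).foldr Formula.imp Formula.bot).imp (l.foldr Formula.or Formula.bot))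
  | [] => tautP (by intro v; simp [evalF])
  | ψ :: t => by
      have ih := link_lemma t
      refine .mp (tautP (φ := (((t.map Formula.neg).foldr Formula.imp Formula.bot).imp
        (t.foldr Formula.or Formula.bot)).imp _) ?_) ih
      intro v; simp only [List.map, List.foldr, evalF, Formula.or]; tauto

lemma k_fold (hX : MaxCons X) (C : Set A) {θ : Formula A Prp} :
    ∀ (l : List (Formula A Prp)), (∀ χ ∈ l, Formula.know C χ ∈ X) →
      Formula.know C (l.foldr Formula.imp θ) ∈ X → Formula.know C θ ∈ X
  | [], _, h => h
  | χ :: t, hl, h => by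
      have hχ : Formula.know C χ ∈ X := hl χ (List.mem_cons_self)
      exact k_fold hX C t (fun χ' h' => hl χ' (List.mem_cons_of_mem _ h')) (k_mp hX h hχ)

/-- From `K ⊢ θ` with `K = {χ | K_C χ ∈ X}` conclude `K_C θ ∈ X`. -/
lemma kc_of_pf (hX : MaxCons X) (C : Set A) {θ : Formula A Prp}
    (h : ProvableFrom {χ | Formula.know C χ ∈ X} θ) : Formula.know C θ ∈ X := by
  obtain ⟨l, hl, hpf⟩ := finite_hyps h
  have hpf2 : ProvableFrom ((∅ : Set (Formula A Prp)) ∪ {f | f ∈ l}) θ :=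
    pf_mono (by intro χ hχ; exact Or.inr hχ) hpf
  have hfold : Provable (l.foldr Formula.imp θ) := pf_empty (peel l hpf2)
  exact k_fold hX C l hl (nec_mem hX hfold)

end Aux5
section Aux6
variable {A Prp : Type}

lemma gamma_consistent {X : Set (Formula A Prp)} (hX : MaxCons X) (C : Set A)
    (φ : Formula A Prp)
    (hφ : (φ.imp (Formula.blame C φ)).neg ∈ X)
    (S : Set (Formula A Prp)) (Dw : Formula A Prp → Set A)
    (hDw : ∀ ψ ∈ S, Dw ψ ⊆ C ∧ Formula.kbar (Dw ψ) (Formula.blame (Dw ψ) ψ) ∈ X)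
    (hdisj : ∀ ψ ∈ S, ∀ ψ' ∈ S, ψ ≠ ψ' → Disjoint (Dw ψ) (Dw ψ')) :
    Consistent ({χ | Formula.know C χ ∈ X} ∪ ({φ} ∪ Formula.neg '' S)) := by
  classical
  intro hbot
  obtain ⟨l, hl, hpf⟩ := finite_hyps hbot
  set lψ : List (Formula A Prp) := l.filterMap
    (fun η => if h : η ∈ Formula.neg '' S then some (Classical.choose h) else none) with hlψ
  set lψd := lψ.dedup with hlψd
  have hSmem : ∀ ψ ∈ lψd, ψ ∈ S := by
    intro ψ hψ
    have hψ2 := List.mem_dedup.1 hψ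
    obtain ⟨η, _, heq⟩ := List.mem_filterMap.1 hψ2
    by_cases h : η ∈ Formula.neg '' S
    · rw [dif_pos h] at heq
      obtain ⟨rfl⟩ := Option.some.inj heq
      exact (Classical.choose_spec h).1
    · rw [dif_neg h] at heq; exact absurd heq (by simp)
  have hsubset : {f | f ∈ l} ⊆
      {χ | Formula.know C χ ∈ X} ∪ {f | f ∈ φ :: lψd.map Formula.neg} := by
    intro η hη
    rcases hl η hη with h | h | h
    · exact Or.inl h
    · refine Or.inr ?_
      simp only [Set.mem_setOf_eq, List.mem_cons]
      exact Or.inl h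
    · right
      have hch := Classical.choose_spec h
      have hmem : Classical.choose h ∈ lψ := by
        rw [hlψ]
        exact List.mem_filterMap.2 ⟨η, hη, by rw [dif_pos h]⟩
      have hmem2 : Classical.choose h ∈ lψd := List.mem_dedup.2 hmem
      have : η ∈ lψd.map Formula.neg := by
        rw [← hch.2]; exact List.mem_map_of_mem hmem2
      simp only [Set.mem_setOf_eq, List.mem_cons]
      exact Or.inr this
  have hpf2 : ProvableFrom ({χ | Formula.know C χ ∈ X} ∪
      {f | f ∈ φ :: lψd.map Formula.neg}) Formula.bot := pf_mono hsubset hpf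
  have hpeel := peel (X := {χ | Formula.know C χ ∈ X}) (φ :: lψd.map Formula.neg) hpf2
  have hkc : Formula.know C (φ.imp ((lψd.map Formula.neg).foldr Formula.imp Formula.bot)) ∈ X :=
    kc_of_pf hX C hpeel
  set Θ := (lψd.map Formula.neg).foldr Formula.imp Formula.bot with hΘ
  set Ψ := lψd.foldr Formula.or Formula.bot with hΨ
  have hlink : Provable (Θ.imp Ψ) := link_lemma lψd
  have hlift : Provable ((φ.imp Θ).imp (φ.imp Ψ)) :=
    .mp (tautP (φ := (Θ.imp Ψ).imp ((φ.imp Θ).imp (φ.imp Ψ)))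
      (by intro v; simp only [evalF]; tauto)) hlink
  have hkcΨ : Formula.know C (φ.imp Ψ) ∈ X := k_mp hX (nec_mem hX hlift) hkc
  obtain ⟨hEC, hcase⟩ := claim_gen hX Dw C lψd lψ.nodup_dedup
    (fun ψ h => (hDw ψ (hSmem ψ h)).1) (fun ψ h => (hDw ψ (hSmem ψ h)).2)
    (fun a ha b hb => hdisj a (hSmem a ha) b (hSmem b hb))
  have hφX : φ ∈ X := mcs_mp hX (mcs_prov hX (tautP
    (φ := ((φ.imp (Formula.blame C φ)).neg).imp φ) (by intro v; simp only [evalF]; tauto))) hφ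
  have himp : φ.imp Ψ ∈ X := mcs_mp hX (mcs_prov hX Provable.truthK) hkcΨ
  have hΨX : Ψ ∈ X := mcs_mp hX himp hφX
  rcases hcase with hkb | hkn
  · have hfair : Ψ.imp (Formula.blame _ Ψ) ∈ X := mcs_mp hX (mcs_prov hX (kbarFair _ Ψ)) hkb
    have hBE : Formula.blame _ Ψ ∈ X := mcs_mp hX hfair hΨX
    have hBC : Formula.blame C Ψ ∈ X := mcs_mp hX (mcs_prov hX (Provable.monoB hEC)) hBE
    have hBφ : φ.imp (Formula.blame C φ) ∈ X :=
      mcs_mp hX (mcs_mp hX (mcs_prov hX Provable.knownCause) hkcΨ) hBC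
    exact mcs_not_both hX hBφ hφ
  · have hnΨ : Ψ.neg ∈ X := mcs_mp hX (mcs_prov hX Provable.truthK) hkn
    exact mcs_not_both hX hΨX hnΨ

lemma maxcons_hd {X₀ : Set (Formula A Prp)} (hX₀ : MaxCons X₀) :
    ∀ l : List (Set A × Set (Formula A Prp)), ValidChain X₀ l →
      MaxCons ((l.map Prod.snd).getLastD X₀) := by
  intro l
  induction l generalizing X₀ with
  | nil => intro _; simpa using hX₀
  | cons p t ih =>
      rintro ⟨h1, _, h3⟩
      rw [List.map_cons, List.getLastD_cons]
      exact ih h1 h3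

lemma validChain_append {X₀ : Set (Formula A Prp)} :
    ∀ (l : List (Set A × Set (Formula A Prp))), ValidChain X₀ l →
      ∀ (C : Set A) (Y : Set (Formula A Prp)), MaxCons Y →
      (∀ χ, Formula.know C χ ∈ (l.map Prod.snd).getLastD X₀ → χ ∈ Y) →
      ValidChain X₀ (l ++ [(C, Y)]) := by
  intro l
  induction l generalizing X₀ with
  | nil =>
      intro _ C Y hY hK
      exact ⟨hY, fun χ h => hK χ (by simpa using h), trivial⟩
  | cons p t ih =>
      rintro ⟨h1, h2, h3⟩ C Y hY hK
      refine ⟨h1, h2, ih h3 C Y hY (fun χ h => hK χ ?_)⟩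
      rw [List.map_cons, List.getLastD_cons]
      exact h

end Aux6

/-- Existence of preventing extensions in the canonical game: for any play
(α, δ, ω) ∈ P, any action profile s ∈ Δ^C, and any formula with
¬(φ → B_C φ) ∈ hd(ω), there is a play (α', δ', ω') ∈ P such that α ∼_C α',
s =_C δ', and φ ∈ hd(ω'). -/
theorem b_child_exists {A Prp : Type} (X₀ : Set (Formula A Prp)) (hX₀ : MaxCons X₀)
    (α : CanonI X₀) (δ : A → Formula A Prp) (ω : COutcome X₀)
    (hP : (α, δ, ω) ∈ CanonP X₀) (C : Set A) (s : C → Formula A Prp)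
    (φ : Formula A Prp)
    (hφ : Formula.neg (Formula.imp φ (Formula.blame C φ)) ∈ hd X₀ ω) :
    ∃ (α' : CanonI X₀) (δ' : A → Formula A Prp) (ω' : COutcome X₀),
      (α', δ', ω') ∈ CanonP X₀ ∧ simIC X₀ C α α' ∧
      (∀ a : C, s a = δ' a.1) ∧ φ ∈ hd X₀ ω' := by
  classical
  obtain ⟨hquot, hplay⟩ := hP
  set X := hd X₀ ω with hXdef
  have hXmcs : MaxCons X := maxcons_hd hX₀ ω.1 ω.2
  set S : Set (Formula A Prp) := {ψ | ∃ D : Set A, D ⊆ C ∧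
    Formula.kbar D (Formula.blame D ψ) ∈ X ∧ ∀ b : C, (b : A) ∈ D → s b = ψ} with hSdef
  set Dw : Formula A Prp → Set A :=
    fun ψ => if h : ψ ∈ S then Classical.choose h else ∅ with hDwdef
  have hDwspec : ∀ ψ ∈ S, Dw ψ ⊆ C ∧ Formula.kbar (Dw ψ) (Formula.blame (Dw ψ) ψ) ∈ X ∧
      ∀ b : C, (b : A) ∈ Dw ψ → s b = ψ := by
    intro ψ h
    simp only [hDwdef, dif_pos h]
    exact Classical.choose_spec h
  have hdisj : ∀ ψ ∈ S, ∀ ψ' ∈ S, ψ ≠ ψ' → Disjoint (Dw ψ) (Dw ψ') := by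
    intro ψ hψ ψ' hψ' hne
    rw [Set.disjoint_left]
    intro a ha ha'
    have h1 := (hDwspec ψ hψ).2.2 ⟨a, (hDwspec ψ hψ).1 ha⟩ ha
    have h2 := (hDwspec ψ' hψ').2.2 ⟨a, (hDwspec ψ hψ).1 ha⟩ ha'
    exact hne (h1 ▸ h2 ▸ rfl)
  have hcons := gamma_consistent hXmcs C φ hφ S Dw
    (fun ψ h => ⟨(hDwspec ψ h).1, (hDwspec ψ h).2.1⟩) hdisj
  obtain ⟨Y, hΓY, hYmcs⟩ := lindenbaum hcons
  have hKY : ∀ χ, Formula.know C χ ∈ X → χ ∈ Y := fun χ h => hΓY (Or.inl h)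
  have hφY : φ ∈ Y := hΓY (Or.inr (Or.inl rfl))
  set ω' : COutcome X₀ := ⟨ω.1 ++ [(C, Y)], validChain_append ω.1 ω.2 C Y hYmcs hKY⟩ with hω'
  refine ⟨Quot.mk _ ω', fun a => if h : a ∈ C then s ⟨a, h⟩ else Formula.top,
    ω', ⟨rfl, ?_⟩, ?_, ?_, ?_⟩
  · -- play condition at the new outcome
    intro D ψ hkb hall
    have hdY : hd X₀ ω' = Y := by
      show ((ω.1 ++ [(C, Y)]).map Prod.snd).getLastD X₀ = Y
      rw [List.map_append]
      exact List.getLastD_concat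
    rw [hdY] at hkb ⊢
    by_cases hDC : D ⊆ C
    · have hkbX : Formula.kbar D (Formula.blame D ψ) ∈ X := by
        by_contra hnot
        have hneg := mcs_neg_of_not_mem hXmcs hnot
        have hkd : Formula.know D (Formula.blame D ψ).neg ∈ X :=
          mcs_mp hXmcs (mcs_prov hXmcs (tautP
            (φ := ((Formula.neg (Formula.know D (Formula.neg (Formula.blame D ψ)))).neg).imp
              (Formula.know D (Formula.blame D ψ).neg))
            (by intro v; simp only [evalF]; tauto))) hneg
        have hkc : Formula.know C (Formula.know D (Formula.blame D ψ).neg) ∈ X :=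
          k_mono_mem hXmcs hDC (pos_mem hXmcs hkd)
        exact mcs_not_both hYmcs (hKY _ hkc) hkb
      have hψS : ψ ∈ S := ⟨D, hDC, hkbX, fun b hb => by
        rw [← hall b hb]
        show s b = if h : (b : A) ∈ C then s ⟨b, h⟩ else Formula.top
        rw [dif_pos b.2]⟩
      exact hΓY (Or.inr (Or.inr ⟨ψ, hψS, rfl⟩))
    · obtain ⟨a, haD, haC⟩ := Set.not_subset.1 hDC
      have htop : ψ = Formula.top := by rw [← hall a haD]; exact dif_neg haC
      subst htop
      exact absurd hkb (fun hkb' =>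
        mcs_not_both hYmcs (nec_mem hYmcs Provable.blameTop) hkb')
  · -- simIC
    refine ⟨ω, _, hquot, rfl, ?_⟩
    intro a ha
    refine ⟨ω.1, [], [(C, Y)], (List.append_nil _).symm, rfl, by simp, ?_⟩
    rintro st hst
    rw [List.mem_singleton.1 hst]
    exact ha
  · -- action profile matches on C
    intro a
    show s a = if h : (a : A) ∈ C then s ⟨a, h⟩ else Formula.top
    rw [dif_pos a.2]
  · -- φ in the new head
    show φ ∈ ((ω.1 ++ [(C, Y)]).map Prod.snd).getLastD X₀
    have : ((ω.1 ++ [(C, Y)]).map Prod.snd).getLastD X₀ = Y := by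
      rw [List.map_append]
      exact List.getLastD_concat
    rw [this]
    exact hφY
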